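/- arXiv:2004.09375 — 2 statements merged into one kernel-verified Lean document; each statement's English description precedes it below -/
import Mathlib

section
/- Let E be a nonempty finite type with a probability measure μ, let n ≥ 2 be an integer, and let P be the product probability measure on Ω = (ZMod (2n) → E), so the coordinates ω(j), j ∈ ZMod(2n), are i.i.d. with law μ. Given f, g : E × E → ℝ, define for each i ∈ ZMod n the random variables U_i(ω) = f(ω(2i−1), ω(2i)) and V_i(ω) = g(ω(2i), ω(2i+1)), where 2i, 2i±1 are computed in ZMod(2n). Then the variance of the cyclic supercell sum satisfies Var(Σ_{i ∈ ZMod n} (U_i + V_i)) = n·(σ_uu + σ_vv + 2·σ_uv), where σ_uu = E[(U_0 − Ū)²], σ_vv = E[(V_0 − V̄)²], σ_uv = E[(U_0 − Ū)·(V_0 + V_{−1} − 2V̄)], with Ū = E[U_0] and V̄ = E[V_0]. -/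
open MeasureTheory ProbabilityTheory

section AuxMeasure

variable {ι : Type*} [Fintype ι] {E : Type*} [Nonempty E]
  [MeasurableSpace E] (μ : Measure E) [IsProbabilityMeasure μ]

lemma aux_integral_mul (p : ι → Prop) [DecidablePred p] (X Y : (ι → E) → ℝ)
    (hX : ∀ ω ω' : ι → E, (∀ j, p j → ω j = ω' j) → X ω = X ω')
    (hY : ∀ ω ω' : ι → E, (∀ j, ¬ p j → ω j = ω' j) → Y ω = Y ω') :
    ∫ ω, X ω * Y ω ∂(Measure.pi fun _ : ι => μ) =
      (∫ ω, X ω ∂(Measure.pi fun _ : ι => μ)) * ∫ ω, Y ω ∂(Measure.pi fun _ : ι => μ) := by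
  classical
  set P : Measure (ι → E) := Measure.pi fun _ : ι => μ with hP
  set e := MeasurableEquiv.piEquivPiSubtypeProd (fun _ : ι => E) p with he
  have hpres : MeasurePreserving e P
      ((Measure.pi fun _ : Subtype p => μ).prod (Measure.pi fun _ : {i // ¬ p i} => μ)) :=
    measurePreserving_piEquivPiSubtypeProd (fun _ : ι => μ) p
  have hsymm := hpres.symm e
  obtain ⟨d⟩ := (inferInstance : Nonempty E)
  set X' : ({i // p i} → E) → ℝ := fun x => X (fun j => if h : p j then x ⟨j, h⟩ else d) with hX'
  set Y' : ({i // ¬ p i} → E) → ℝ := fun y => Y (fun j => if h : p j then d else y ⟨j, h⟩) with hY'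
  have hXe : ∀ z, X (e.symm z) = X' z.1 := by
    intro z
    apply hX
    intro j hj
    simp [he, MeasurableEquiv.piEquivPiSubtypeProd, Equiv.piEquivPiSubtypeProd, hj]
  have hYe : ∀ z, Y (e.symm z) = Y' z.2 := by
    intro z
    apply hY
    intro j hj
    simp [he, MeasurableEquiv.piEquivPiSubtypeProd, Equiv.piEquivPiSubtypeProd, hj]
  have key : ∀ W : (ι → E) → ℝ, ∫ ω, W ω ∂P = ∫ z, W (e.symm z)
      ∂((Measure.pi fun _ : Subtype p => μ).prod (Measure.pi fun _ : {i // ¬ p i} => μ)) :=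
    fun W => (hsymm.integral_comp' W).symm
  rw [key (fun ω => X ω * Y ω), key X, key Y]
  simp only [hXe, hYe]
  rw [integral_prod_mul X' Y']
  congr 1
  · have := integral_prod_mul (μ := Measure.pi fun _ : Subtype p => μ)
      (ν := Measure.pi fun _ : {i // ¬ p i} => μ) X' (fun _ => (1:ℝ))
    simpa using this.symm
  · have := integral_prod_mul (μ := Measure.pi fun _ : Subtype p => μ)
      (ν := Measure.pi fun _ : {i // ¬ p i} => μ) (fun _ => (1:ℝ)) Y'
    simpa using this.symm

lemma aux_shift {m : ℕ} [NeZero m] (c : ZMod m) (W : (ZMod m → E) → ℝ) :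
    ∫ ω, W (fun j => ω (j + c)) ∂(Measure.pi fun _ : ZMod m => μ)
      = ∫ ω, W ω ∂(Measure.pi fun _ : ZMod m => μ) := by
  have h : MeasurePreserving
      (MeasurableEquiv.arrowCongr' (Equiv.addRight c).symm (MeasurableEquiv.refl E))
      (Measure.pi fun _ : ZMod m => μ) (Measure.pi fun _ : ZMod m => μ) :=
    measurePreserving_arrowCongr' (fun _ => μ) (fun _ => μ) (Equiv.addRight c).symm
      (MeasurableEquiv.refl E) (fun _ => ⟨measurable_id, by simp [MeasurableEquiv.refl]⟩)
  have hco : ⇑(MeasurableEquiv.arrowCongr' (Equiv.addRight c).symm (MeasurableEquiv.refl E))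
      = fun (ω : ZMod m → E) j => ω (j + c) := by
    ext ω j
    simp [MeasurableEquiv.arrowCongr', Equiv.arrowCongr', Equiv.arrowCongr]
  have := h.integral_comp' W
  rw [hco] at this
  exact this

lemma pair_integral_mul [DecidableEq ι] (F G : E × E → ℝ) (a b a' b' : ι)
    (h1 : a' ≠ a) (h2 : a' ≠ b) (h3 : b' ≠ a) (h4 : b' ≠ b) :
    ∫ ω, F (ω a, ω b) * G (ω a', ω b') ∂(Measure.pi fun _ : ι => μ)
      = (∫ ω, F (ω a, ω b) ∂(Measure.pi fun _ : ι => μ))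
        * ∫ ω, G (ω a', ω b') ∂(Measure.pi fun _ : ι => μ) := by
  apply aux_integral_mul μ (fun j => j = a ∨ j = b)
  · intro ω ω' h
    rw [h a (Or.inl rfl), h b (Or.inr rfl)]
  · intro ω ω' h
    rw [h a' (by push_neg; exact ⟨h1, h2⟩), h b' (by push_neg; exact ⟨h3, h4⟩)]

end AuxMeasure

section AuxZMod

lemma cast2_add {n : ℕ} [NeZero n] (a b : ZMod n) :
    2 * (((a + b).val : ℕ) : ZMod (2 * n))
      = 2 * ((a.val : ℕ) : ZMod (2 * n)) + 2 * ((b.val : ℕ) : ZMod (2 * n)) := by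
  have hv : (a + b).val = (a.val + b.val) % n := ZMod.val_add a b
  have h0 : ((2 * n : ℕ) : ZMod (2 * n)) = 0 := ZMod.natCast_self _
  have hnat : 2 * (a.val + b.val)
      = 2 * ((a.val + b.val) % n) + 2 * n * ((a.val + b.val) / n) := by
    calc 2 * (a.val + b.val)
        = 2 * ((a.val + b.val) % n + n * ((a.val + b.val) / n)) := by
          rw [Nat.mod_add_div]
      _ = 2 * ((a.val + b.val) % n) + 2 * n * ((a.val + b.val) / n) := by ring
  have hc : ((2 * (a.val + b.val) : ℕ) : ZMod (2 * n))
      = ((2 * ((a.val + b.val) % n) : ℕ) : ZMod (2 * n))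
        + ((2 * n : ℕ) : ZMod (2 * n)) * (((a.val + b.val) / n : ℕ) : ZMod (2 * n)) := by
    rw [← Nat.cast_mul, ← Nat.cast_add, hnat]
  rw [h0, zero_mul, add_zero] at hc
  rw [hv]
  push_cast at hc ⊢
  linear_combination -hc

lemma cast2_inj {n : ℕ} [NeZero n] {a b : ZMod n}
    (h : 2 * ((a.val : ℕ) : ZMod (2 * n)) = 2 * ((b.val : ℕ) : ZMod (2 * n))) : a = b := by
  have ha : a.val < n := ZMod.val_lt a
  have hb : b.val < n := ZMod.val_lt b
  have h' : ((2 * a.val : ℕ) : ZMod (2 * n)) = ((2 * b.val : ℕ) : ZMod (2 * n)) := by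
    push_cast; linear_combination h
  have hval := congrArg ZMod.val h'
  rw [ZMod.val_natCast_of_lt (by omega), ZMod.val_natCast_of_lt (by omega)] at hval
  have : a.val = b.val := by omega
  exact ZMod.val_injective n this

lemma two_mul_ne_two_mul_add_one {n : ℕ} [NeZero n] (x y : ZMod (2 * n)) :
    2 * x ≠ 2 * y + 1 := by
  intro h
  have h2 : (2 : ℕ) ∣ 2 * n := ⟨n, rfl⟩
  have := congrArg (ZMod.castHom h2 (ZMod 2)) h
  simp only [map_add, map_mul, map_one, map_ofNat] at this
  have h0 : (2 : ZMod 2) = 0 := rfl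
  rw [h0, zero_mul, zero_mul, zero_add] at this
  exact zero_ne_one this

end AuxZMod

/-- **Variance of the stochastic generalized stacking fault energy of a supercell**
(Eqs. (4.11)-(4.16) of the paper).  For a cyclic supercell of `2 n` i.i.d. lattice sites
with bond energies `U i (ω) = f (ω (2i-1), ω (2i))` and `V i (ω) = g (ω (2i), ω (2i+1))`,
the variance of the supercell sum is
`Var (Σ_i (U i + V i)) = n (σ_uu + σ_vv + 2 σ_uv)`. -/
theorem variance_supercell_misfit_sum
    {E : Type*} [Fintype E] [Nonempty E] [MeasurableSpace E] [MeasurableSingletonClass E]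
    (μ : Measure E) [IsProbabilityMeasure μ]
    (n : ℕ) (hn : 2 ≤ n) (f g : E × E → ℝ) :
    letI : NeZero n := ⟨by omega⟩
    letI : NeZero (2 * n) := ⟨by omega⟩
    ∀ U V : ZMod n → (ZMod (2 * n) → E) → ℝ,
      (∀ i ω, U i ω = f (ω (2 * (i.val : ZMod (2 * n)) - 1), ω (2 * (i.val : ZMod (2 * n))))) →
      (∀ i ω, V i ω = g (ω (2 * (i.val : ZMod (2 * n))), ω (2 * (i.val : ZMod (2 * n)) + 1))) →
      -- `P` is the product measure: the `2 n` lattice sites are i.i.d. with law `μ`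
      let P : Measure (ZMod (2 * n) → E) := Measure.pi fun _ => μ
      let Ubar : ℝ := ∫ ω, U 0 ω ∂P
      let Vbar : ℝ := ∫ ω, V 0 ω ∂P
      let σuu : ℝ := ∫ ω, (U 0 ω - Ubar) ^ 2 ∂P
      let σvv : ℝ := ∫ ω, (V 0 ω - Vbar) ^ 2 ∂P
      let σuv : ℝ := ∫ ω, (U 0 ω - Ubar) * (V 0 ω + V (-1) ω - 2 * Vbar) ∂P
      variance (fun ω => ∑ i : ZMod n, (U i ω + V i ω)) P
        = (n : ℝ) * (σuu + σvv + 2 * σuv) := by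
  haveI : NeZero n := ⟨by omega⟩
  haveI : NeZero (2 * n) := ⟨by omega⟩
  haveI : Fact (1 < n) := ⟨by omega⟩
  intro U V hU hV P Ubar Vbar σuu σvv σuv
  set c : ZMod n → ZMod (2 * n) := fun i => 2 * ((i.val : ℕ) : ZMod (2 * n)) with hc
  -- basic arithmetic facts about `c`
  have hc_add : ∀ i j : ZMod n, c (i + j) = c i + c j := fun i j => cast2_add i j
  have hc_inj : ∀ {i j : ZMod n}, c i = c j → i = j := fun {i j} h => cast2_inj h
  have hc0 : c 0 = 0 := by simp [hc]
  have hc1 : c 1 = 2 := by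
    simp only [hc]
    rw [ZMod.val_one]
    norm_num
  have hpar : ∀ i j : ZMod n, c i ≠ c j + 1 :=
    fun i j => two_mul_ne_two_mul_add_one _ _
  -- integrability of everything in sight
  have hint : ∀ W : (ZMod (2 * n) → E) → ℝ, Integrable W P := fun W => Integrable.of_finite
  -- rewrite U, V in terms of c
  have hU' : ∀ i ω, U i ω = f (ω (c i - 1), ω (c i)) := by
    intro i ω; rw [hU]
  have hV' : ∀ i ω, V i ω = g (ω (c i), ω (c i + 1)) := by
    intro i ω; rw [hV]
  -- shift identities
  have hshift : ∀ (i : ZMod n) (W : (ZMod (2 * n) → E) → ℝ),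
      ∫ ω, W (fun j => ω (j + c i)) ∂P = ∫ ω, W ω ∂P := fun i W => aux_shift μ (c i) W
  have hUs : ∀ (i : ZMod n) ω, U i ω = U 0 (fun j => ω (j + c i)) := by
    intro i ω
    rw [hU' i, hU' 0]
    have e1 : c 0 - 1 + c i = c i - 1 := by rw [hc0]; ring
    have e2 : c 0 + c i = c i := by rw [hc0]; ring
    simp only [e1, e2]
  have hVs : ∀ (i : ZMod n) ω, V i ω = V 0 (fun j => ω (j + c i)) := by
    intro i ω
    rw [hV' i, hV' 0]
    have e1 : c 0 + c i = c i := by rw [hc0]; ring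
    have e2 : c 0 + 1 + c i = c i + 1 := by rw [hc0]; ring
    simp only [e1, e2]
  have hVs' : ∀ (i : ZMod n) ω, V (i - 1) ω = V (-1) (fun j => ω (j + c i)) := by
    intro i ω
    rw [hV' (i - 1), hV' (-1)]
    have e1 : c (-1) + c i = c (i - 1) := by
      rw [← hc_add]; congr 1; ring
    have e2 : c (-1) + 1 + c i = c (i - 1) + 1 := by rw [← e1]; ring
    simp only [e1, e2]
  -- means
  have hUmean : ∀ i, ∫ ω, U i ω ∂P = Ubar := by
    intro i
    calc ∫ ω, U i ω ∂P = ∫ ω, U 0 (fun j => ω (j + c i)) ∂P := by simp only [hUs i]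
      _ = ∫ ω, U 0 ω ∂P := hshift i (U 0)
      _ = Ubar := rfl
  have hVmean : ∀ i, ∫ ω, V i ω ∂P = Vbar := by
    intro i
    calc ∫ ω, V i ω ∂P = ∫ ω, V 0 (fun j => ω (j + c i)) ∂P := by simp only [hVs i]
      _ = ∫ ω, V 0 ω ∂P := hshift i (V 0)
      _ = Vbar := rfl
  have hu0 : ∀ i, ∫ ω, (U i ω - Ubar) ∂P = 0 := by
    intro i
    rw [integral_sub (hint _) (integrable_const _), hUmean i, integral_const]
    simp
  have hv0 : ∀ i, ∫ ω, (V i ω - Vbar) ∂P = 0 := by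
    intro i
    rw [integral_sub (hint _) (integrable_const _), hVmean i, integral_const]
    simp
  -- diagonal second moments via shifts
  have hUU : ∀ i, ∫ ω, (U i ω - Ubar) * (U i ω - Ubar) ∂P
      = ∫ ω, (U 0 ω - Ubar) * (U 0 ω - Ubar) ∂P := by
    intro i
    calc ∫ ω, (U i ω - Ubar) * (U i ω - Ubar) ∂P
        = ∫ ω, (fun ω' => (U 0 ω' - Ubar) * (U 0 ω' - Ubar)) (fun j => ω (j + c i)) ∂P := by
          simp only [hUs i]
      _ = _ := hshift i (fun ω' => (U 0 ω' - Ubar) * (U 0 ω' - Ubar))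
  have hVV : ∀ i, ∫ ω, (V i ω - Vbar) * (V i ω - Vbar) ∂P
      = ∫ ω, (V 0 ω - Vbar) * (V 0 ω - Vbar) ∂P := by
    intro i
    calc ∫ ω, (V i ω - Vbar) * (V i ω - Vbar) ∂P
        = ∫ ω, (fun ω' => (V 0 ω' - Vbar) * (V 0 ω' - Vbar)) (fun j => ω (j + c i)) ∂P := by
          simp only [hVs i]
      _ = _ := hshift i (fun ω' => (V 0 ω' - Vbar) * (V 0 ω' - Vbar))
  have hUV0 : ∀ i, ∫ ω, (U i ω - Ubar) * (V i ω - Vbar) ∂P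
      = ∫ ω, (U 0 ω - Ubar) * (V 0 ω - Vbar) ∂P := by
    intro i
    calc ∫ ω, (U i ω - Ubar) * (V i ω - Vbar) ∂P
        = ∫ ω, (fun ω' => (U 0 ω' - Ubar) * (V 0 ω' - Vbar)) (fun j => ω (j + c i)) ∂P := by
          simp only [hUs i, hVs i]
      _ = _ := hshift i (fun ω' => (U 0 ω' - Ubar) * (V 0 ω' - Vbar))
  have hUV1 : ∀ i, ∫ ω, (U i ω - Ubar) * (V (i - 1) ω - Vbar) ∂P
      = ∫ ω, (U 0 ω - Ubar) * (V (-1) ω - Vbar) ∂P := by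
    intro i
    calc ∫ ω, (U i ω - Ubar) * (V (i - 1) ω - Vbar) ∂P
        = ∫ ω, (fun ω' => (U 0 ω' - Ubar) * (V (-1) ω' - Vbar)) (fun j => ω (j + c i)) ∂P := by
          simp only [hUs i, hVs' i]
      _ = _ := hshift i (fun ω' => (U 0 ω' - Ubar) * (V (-1) ω' - Vbar))
  set s1 : ℝ := ∫ ω, (U 0 ω - Ubar) * (V 0 ω - Vbar) ∂P with hs1
  set s2 : ℝ := ∫ ω, (U 0 ω - Ubar) * (V (-1) ω - Vbar) ∂P with hs2
  -- vanishing covariances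
  have hIuu : ∀ i j : ZMod n, i ≠ j → (∫ ω, (U i ω - Ubar) * (U j ω - Ubar) ∂P) = 0 := by
    intro i j hij
    have h1 : c j - 1 ≠ c i - 1 := by
      intro h; exact hij (hc_inj (by linear_combination h)).symm
    have h2 : c j - 1 ≠ c i := by
      intro h; exact hpar j i (by linear_combination h)
    have h3 : c j ≠ c i - 1 := by
      intro h; exact hpar i j (by linear_combination -h)
    have h4 : c j ≠ c i := fun h => hij (hc_inj h).symm
    calc ∫ ω, (U i ω - Ubar) * (U j ω - Ubar) ∂P
        = ∫ ω, (f (ω (c i - 1), ω (c i)) - Ubar) * (f (ω (c j - 1), ω (c j)) - Ubar) ∂P := by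
          simp only [hU']
      _ = (∫ ω, (f (ω (c i - 1), ω (c i)) - Ubar) ∂P)
            * ∫ ω, (f (ω (c j - 1), ω (c j)) - Ubar) ∂P :=
          pair_integral_mul μ (fun p => f p - Ubar) (fun p => f p - Ubar)
            (c i - 1) (c i) (c j - 1) (c j) h1 h2 h3 h4
      _ = 0 := by
          have h0 := hu0 i
          simp only [hU'] at h0
          rw [h0, zero_mul]
  have hIvv : ∀ i j : ZMod n, i ≠ j → (∫ ω, (V i ω - Vbar) * (V j ω - Vbar) ∂P) = 0 := by
    intro i j hij
    have h1 : c j ≠ c i := fun h => hij (hc_inj h).symm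
    have h2 : c j ≠ c i + 1 := hpar j i
    have h3 : c j + 1 ≠ c i := fun h => hpar i j h.symm
    have h4 : c j + 1 ≠ c i + 1 := by
      intro h; exact hij (hc_inj (by linear_combination h)).symm
    calc ∫ ω, (V i ω - Vbar) * (V j ω - Vbar) ∂P
        = ∫ ω, (g (ω (c i), ω (c i + 1)) - Vbar) * (g (ω (c j), ω (c j + 1)) - Vbar) ∂P := by
          simp only [hV']
      _ = (∫ ω, (g (ω (c i), ω (c i + 1)) - Vbar) ∂P)
            * ∫ ω, (g (ω (c j), ω (c j + 1)) - Vbar) ∂P :=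
          pair_integral_mul μ (fun p => g p - Vbar) (fun p => g p - Vbar)
            (c i) (c i + 1) (c j) (c j + 1) h1 h2 h3 h4
      _ = 0 := by
          have h0 := hv0 i
          simp only [hV'] at h0
          rw [h0, zero_mul]
  have hIuv : ∀ i j : ZMod n, j ≠ i → j ≠ i - 1 →
      (∫ ω, (U i ω - Ubar) * (V j ω - Vbar) ∂P) = 0 := by
    intro i j hji hji'
    have h1 : c j ≠ c i - 1 := by
      intro h; exact hpar i j (by linear_combination -h)
    have h2 : c j ≠ c i := fun h => hji (hc_inj h)
    have h3 : c j + 1 ≠ c i - 1 := by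
      intro h
      apply hji'
      have : c i = c (j + 1) := by
        rw [hc_add, hc1]; linear_combination -h
      have hij1 : i = j + 1 := hc_inj this
      rw [hij1]; ring
    have h4 : c j + 1 ≠ c i := fun h => hpar i j h.symm
    calc ∫ ω, (U i ω - Ubar) * (V j ω - Vbar) ∂P
        = ∫ ω, (f (ω (c i - 1), ω (c i)) - Ubar) * (g (ω (c j), ω (c j + 1)) - Vbar) ∂P := by
          simp only [hU', hV']
      _ = (∫ ω, (f (ω (c i - 1), ω (c i)) - Ubar) ∂P)
            * ∫ ω, (g (ω (c j), ω (c j + 1)) - Vbar) ∂P :=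
          pair_integral_mul μ (fun p => f p - Ubar) (fun p => g p - Vbar)
            (c i - 1) (c i) (c j) (c j + 1) h1 h2 h3 h4
      _ = 0 := by
          have h0 := hu0 i
          simp only [hU'] at h0
          rw [h0, zero_mul]
  -- row sums
  have hone : (1 : ZMod n) ≠ 0 := one_ne_zero
  have hrow_uu : ∀ i : ZMod n, (∑ j : ZMod n, ∫ ω, (U i ω - Ubar) * (U j ω - Ubar) ∂P)
      = ∫ ω, (U 0 ω - Ubar) * (U 0 ω - Ubar) ∂P := by
    intro i
    rw [Finset.sum_eq_single i (fun j _ hj => hIuu i j (fun h => hj h.symm)) (by simp)]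
    exact hUU i
  have hrow_vv : ∀ i : ZMod n, (∑ j : ZMod n, ∫ ω, (V i ω - Vbar) * (V j ω - Vbar) ∂P)
      = ∫ ω, (V 0 ω - Vbar) * (V 0 ω - Vbar) ∂P := by
    intro i
    rw [Finset.sum_eq_single i (fun j _ hj => hIvv i j (fun h => hj h.symm)) (by simp)]
    exact hVV i
  have hrow_uv : ∀ i : ZMod n, (∑ j : ZMod n, ∫ ω, (U i ω - Ubar) * (V j ω - Vbar) ∂P)
      = s1 + s2 := by
    intro i
    have hne : i ≠ i - 1 := by
      intro h
      apply hone
      linear_combination h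
    rw [← Finset.sum_subset (Finset.subset_univ ({i, i - 1} : Finset (ZMod n)))
      (fun j _ hj => by
        simp only [Finset.mem_insert, Finset.mem_singleton, not_or] at hj
        exact hIuv i j hj.1 hj.2)]
    rw [Finset.sum_pair hne, hUV0 i, hUV1 i]
  have hrow_vu : ∀ i : ZMod n, (∑ j : ZMod n, ∫ ω, (V i ω - Vbar) * (U j ω - Ubar) ∂P)
      = s1 + s2 := by
    intro i
    have hflip : ∀ j : ZMod n, (∫ ω, (V i ω - Vbar) * (U j ω - Ubar) ∂P)
        = ∫ ω, (U j ω - Ubar) * (V i ω - Vbar) ∂P := by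
      intro j
      congr 1
      funext ω
      ring
    simp only [hflip]
    have hne : i ≠ i + 1 := by
      intro h
      apply hone
      linear_combination -h
    rw [← Finset.sum_subset (Finset.subset_univ ({i, i + 1} : Finset (ZMod n)))
      (fun j _ hj => by
        simp only [Finset.mem_insert, Finset.mem_singleton, not_or] at hj
        refine hIuv j i (fun h => hj.1 h.symm) (fun h => hj.2 ?_)
        rw [h]; ring)]
    rw [Finset.sum_pair hne, hUV0 i]
    have := hUV1 (i + 1)
    rw [add_sub_cancel_right] at this
    rw [this]
  -- express σ's
  have hσuu : σuu = ∫ ω, (U 0 ω - Ubar) * (U 0 ω - Ubar) ∂P := by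
    show (∫ ω, (U 0 ω - Ubar) ^ 2 ∂P) = _
    congr 1
    funext ω
    ring
  have hσvv : σvv = ∫ ω, (V 0 ω - Vbar) * (V 0 ω - Vbar) ∂P := by
    show (∫ ω, (V 0 ω - Vbar) ^ 2 ∂P) = _
    congr 1
    funext ω
    ring
  have hσuv : σuv = s1 + s2 := by
    show (∫ ω, (U 0 ω - Ubar) * (V 0 ω + V (-1) ω - 2 * Vbar) ∂P) = s1 + s2
    rw [show (fun ω => (U 0 ω - Ubar) * (V 0 ω + V (-1) ω - 2 * Vbar))
        = fun ω => (U 0 ω - Ubar) * (V 0 ω - Vbar) + (U 0 ω - Ubar) * (V (-1) ω - Vbar)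
      from funext fun ω => by ring]
    rw [integral_add (hint _) (hint _)]
  -- the expectation of the sum
  have hES : ∫ ω, (∑ i : ZMod n, (U i ω + V i ω)) ∂P = ∑ _i : ZMod n, (Ubar + Vbar) := by
    rw [integral_finset_sum _ (fun i _ => hint _)]
    refine Finset.sum_congr rfl fun i _ => ?_
    rw [integral_add (hint _) (hint _), hUmean i, hVmean i]
  -- variance as an integral
  have hmem : MemLp (fun ω => ∑ i : ZMod n, (U i ω + V i ω)) 2 P := MemLp.of_discrete
  rw [variance_eq_integral hmem.aemeasurable]
  change ∫ ω, ((((fun ω => ∑ i : ZMod n, (U i ω + V i ω))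
      - fun _ => ∫ ω, (∑ i : ZMod n, (U i ω + V i ω)) ∂P) ^ (2 : ℕ) : (ZMod (2 * n) → E) → ℝ) ω) ∂P = _
  have hexp : ((fun ω => ∑ i : ZMod n, (U i ω + V i ω))
      - fun _ => ∫ ω, (∑ i : ZMod n, (U i ω + V i ω)) ∂P) ^ (2 : ℕ)
      = fun ω => ∑ i : ZMod n, ∑ j : ZMod n,
          (((U i ω - Ubar) * (U j ω - Ubar) + (U i ω - Ubar) * (V j ω - Vbar))
            + ((V i ω - Vbar) * (U j ω - Ubar) + (V i ω - Vbar) * (V j ω - Vbar))) := by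
    funext ω
    simp only [Pi.pow_apply, Pi.sub_apply, hES]
    rw [← Finset.sum_sub_distrib]
    rw [show (∑ i : ZMod n, (U i ω + V i ω - (Ubar + Vbar)))
        = ∑ i : ZMod n, ((U i ω - Ubar) + (V i ω - Vbar))
      from Finset.sum_congr rfl fun i _ => by ring]
    rw [pow_two, Finset.sum_mul_sum]
    refine Finset.sum_congr rfl fun i _ => Finset.sum_congr rfl fun j _ => by ring
  rw [hexp]
  beta_reduce
  rw [integral_finset_sum _ (fun i _ => hint _)]
  have hterm : ∀ i : ZMod n,
      (∫ ω, (∑ j : ZMod n,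
        (((U i ω - Ubar) * (U j ω - Ubar) + (U i ω - Ubar) * (V j ω - Vbar))
          + ((V i ω - Vbar) * (U j ω - Ubar) + (V i ω - Vbar) * (V j ω - Vbar)))) ∂P)
      = σuu + σvv + 2 * σuv := by
    intro i
    rw [integral_finset_sum _ (fun j _ => hint _)]
    have : ∀ j : ZMod n, (∫ ω,
        (((U i ω - Ubar) * (U j ω - Ubar) + (U i ω - Ubar) * (V j ω - Vbar))
          + ((V i ω - Vbar) * (U j ω - Ubar) + (V i ω - Vbar) * (V j ω - Vbar))) ∂P)
        = ((∫ ω, (U i ω - Ubar) * (U j ω - Ubar) ∂P)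
            + ∫ ω, (U i ω - Ubar) * (V j ω - Vbar) ∂P)
          + ((∫ ω, (V i ω - Vbar) * (U j ω - Ubar) ∂P)
            + ∫ ω, (V i ω - Vbar) * (V j ω - Vbar) ∂P) := by
      intro j
      have e1 : Integrable (fun ω => (U i ω - Ubar) * (U j ω - Ubar)) P := hint _
      have e2 : Integrable (fun ω => (U i ω - Ubar) * (V j ω - Vbar)) P := hint _
      have e3 : Integrable (fun ω => (V i ω - Vbar) * (U j ω - Ubar)) P := hint _
      have e4 : Integrable (fun ω => (V i ω - Vbar) * (V j ω - Vbar)) P := hint _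
      have h12 := integral_add e1 e2
      have h34 := integral_add e3 e4
      have hall := integral_add (e1.add e2) (e3.add e4)
      simp only [Pi.add_apply] at hall
      rw [hall, h12, h34]
    simp only [this]
    rw [Finset.sum_add_distrib, Finset.sum_add_distrib, Finset.sum_add_distrib]
    rw [hrow_uu i, hrow_uv i, hrow_vu i, hrow_vv i, hσuu, hσvv, hσuv]
    ring
  simp only [hterm]
  rw [Finset.sum_const, Finset.card_univ, ZMod.card, nsmul_eq_mul]
end

section
/- Let E be a nonempty finite type with a probability measure μ, let n ≥ 3 be an integer, and let P be the product probability measure on Ω = (ZMod (2n) → E), so the coordinates ω(j), j ∈ ZMod(2n), are i.i.d. with law μ. Let f, g, b : E × E → ℝ be symmetric functions (f(x,y) = f(y,x), g(x,y) = g(y,x), b(x,y) = b(y,x)) and c₊, c₋ ∈ ℝ. For i ∈ ZMod n define U_i(ω) = f(ω(2i−1), ω(2i)), V_i(ω) = g(ω(2i), ω(2i+1)), β⁺_i(ω) = b(ω(2i), ω(2i+2)), β⁻_i(ω) = b(ω(2i−1), ω(2i+1)), indices in ZMod(2n), and set Ū = E[U_0], V̄ = E[V_0], β̄ = E[β⁺_0].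 Then Var( Σ_{i ∈ ZMod n} (U_i + V_i + c₊·β⁺_i + c₋·β⁻_i) ) = n·[ σ_uu + σ_vv + 2σ_uv + (c₊² + c₋²)·σ_ββ + 2(c₊ + c₋)·(σ_βu + σ_βv) ], where σ_uu = Var(U_0), σ_vv = Var(V_0), σ_uv = E[(U_0 − Ū)(V_0 + V_{−1} − 2V̄)], σ_ββ = E[(β⁺_0 − β̄)(β⁺_{−1} + β⁺_0 + β⁺_1 − 3β̄)], σ_βu = E[(U_0 − Ū)(β⁺_{−1} + β⁺_0 − 2β̄)], and σ_βv = E[(V_0 − V̄)(β⁺_{−1} + β⁺_0 − 2β̄)]. -/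
open MeasureTheory ProbabilityTheory

namespace SupercellVarianceAux

variable {E : Type*} [Fintype E] [Nonempty E] [MeasurableSpace E] [MeasurableSingletonClass E]
variable {ι : Type*} [Fintype ι] [DecidableEq ι]
variable (μ : Measure E) [IsProbabilityMeasure μ]

set_option linter.unusedSectionVars false

lemma integral_reindex (e : ι ≃ ι) (X : (ι → E) → ℝ) :
    ∫ ω, X (fun j => ω (e j)) ∂(Measure.pi fun _ : ι => μ)
      = ∫ ω, X ω ∂(Measure.pi fun _ : ι => μ) := by
  have h : MeasurePreserving (fun ω : ι → E => fun j => ω (e j))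
      (Measure.pi fun _ : ι => μ) (Measure.pi fun _ : ι => μ) := by
    have h2 := measurePreserving_arrowCongr' (fun _ : ι => μ) (fun _ : ι => μ) e.symm
      (MeasurableEquiv.refl E) (fun _ => ⟨measurable_id, Measure.map_id⟩)
    have hfun : (fun ω : ι → E => fun j => ω (e j))
        = ⇑(MeasurableEquiv.arrowCongr' e.symm (MeasurableEquiv.refl E)) := by
      ext ω j
      simp [MeasurableEquiv.arrowCongr', Equiv.arrowCongr', Equiv.arrowCongr]
    rw [hfun]
    exact h2
  conv_rhs => rw [← h.map_eq]
  rw [integral_map (Measurable.of_discrete).aemeasurable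
    (Measurable.of_discrete).aestronglyMeasurable]

lemma zmod_intCast_ne {M : ℕ} [NeZero M] (a b : ℤ) (h0 : a - b ≠ 0)
    (h1 : a - b < M) (h2 : b - a < M) : (a : ZMod M) ≠ (b : ZMod M) := by
  intro h
  have hd : ((a - b : ℤ) : ZMod M) = 0 := by push_cast; rw [h]; ring
  rw [ZMod.intCast_zmod_eq_zero_iff_dvd] at hd
  have hle := Int.le_of_dvd (abs_pos.2 h0) ((dvd_abs _ _).2 hd)
  have : |a - b| < (M : ℤ) := abs_lt.2 ⟨by omega, h1⟩
  omega

lemma integral_mul_of_disjoint (S T : Finset ι) (hST : Disjoint S T)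
    (X Y : (ι → E) → ℝ)
    (hX : ∀ ω ω' : ι → E, (∀ j ∈ S, ω j = ω' j) → X ω = X ω')
    (hY : ∀ ω ω' : ι → E, (∀ j ∈ T, ω j = ω' j) → Y ω = Y ω') :
    ∫ ω, X ω * Y ω ∂(Measure.pi fun _ : ι => μ)
      = (∫ ω, X ω ∂(Measure.pi fun _ : ι => μ))
          * ∫ ω, Y ω ∂(Measure.pi fun _ : ι => μ) := by
  inhabit E
  classical
  set p : ι → Prop := fun i => i ∈ S with hp
  set e := MeasurableEquiv.piEquivPiSubtypeProd (fun _ : ι => E) p with he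
  have mp := measurePreserving_piEquivPiSubtypeProd (fun _ : ι => μ) p
  set fS : ({i // p i} → E) → ℝ :=
    fun a => X (fun j => if h : p j then a ⟨j, h⟩ else default) with hfS
  set gT : ({i // ¬ p i} → E) → ℝ :=
    fun b => Y (fun j => if h : p j then default else b ⟨j, h⟩) with hgT
  have hXe : ∀ z : ({i // p i} → E) × ({i // ¬ p i} → E), X (e.symm z) = fS z.1 := by
    intro z
    apply hX
    intro j hj
    have hpj : p j := hj
    simp [he, MeasurableEquiv.piEquivPiSubtypeProd, Equiv.piEquivPiSubtypeProd, hpj]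
  have hYe : ∀ z : ({i // p i} → E) × ({i // ¬ p i} → E), Y (e.symm z) = gT z.2 := by
    intro z
    apply hY
    intro j hj
    have hpj : ¬ p j := fun hmem => (Finset.disjoint_left.1 hST) hmem hj
    simp [he, MeasurableEquiv.piEquivPiSubtypeProd, Equiv.piEquivPiSubtypeProd, hpj]
  have key := fun (Z : (ι → E) → ℝ) => ((mp.symm e).integral_comp' Z).symm
  have e1 := (key (fun ω => X ω * Y ω)).trans (integral_congr_ae
    (Filter.Eventually.of_forall
      (fun z => by rw [hXe, hYe] :
        ∀ z, X (e.symm z) * Y (e.symm z) = fS z.1 * gT z.2)))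
  have e2 := (key X).trans (integral_congr_ae (Filter.Eventually.of_forall hXe))
  have e3 := (key Y).trans (integral_congr_ae (Filter.Eventually.of_forall hYe))
  rw [e1, e2, e3, integral_prod_mul fS gT, integral_fun_fst, integral_fun_snd]
  simp

end SupercellVarianceAux

open SupercellVarianceAux

set_option maxHeartbeats 2000000 in
/-- **Variance of the total Peierls-Nabarro energy of a supercell**
(Eqs. (6.2)-(6.9) of the paper).  For a cyclic supercell of `2 n` i.i.d. lattice sites with
misfit bond energies `U i, V i`, stiffness coefficients `β⁺ i, β⁻ i` and elastic weights
`c₊, c₋`, the variance of the total supercell energy fluctuation is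
`Var (Σ_i (U i + V i + c₊ β⁺ i + c₋ β⁻ i))
  = n (σ_uu + σ_vv + 2 σ_uv + (c₊² + c₋²) σ_ββ + 2 (c₊ + c₋)(σ_βu + σ_βv))`. -/
theorem variance_supercell_total_energy
    {E : Type*} [Fintype E] [Nonempty E] [MeasurableSpace E] [MeasurableSingletonClass E]
    (μ : Measure E) [IsProbabilityMeasure μ]
    (n : ℕ) (hn : 3 ≤ n) (f g b : E × E → ℝ)
    (hf : ∀ x y, f (x, y) = f (y, x)) (hg : ∀ x y, g (x, y) = g (y, x))
    (hb : ∀ x y, b (x, y) = b (y, x))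
    (cp cm : ℝ) :
    letI : NeZero n := ⟨by omega⟩
    letI : NeZero (2 * n) := ⟨by omega⟩
    ∀ U V βp βm : ZMod n → (ZMod (2 * n) → E) → ℝ,
      (∀ i ω, U i ω = f (ω (2 * (i.val : ZMod (2 * n)) - 1), ω (2 * (i.val : ZMod (2 * n))))) →
      (∀ i ω, V i ω = g (ω (2 * (i.val : ZMod (2 * n))), ω (2 * (i.val : ZMod (2 * n)) + 1))) →
      (∀ i ω, βp i ω = b (ω (2 * (i.val : ZMod (2 * n))), ω (2 * (i.val : ZMod (2 * n)) + 2))) →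
      (∀ i ω, βm i ω = b (ω (2 * (i.val : ZMod (2 * n)) - 1), ω (2 * (i.val : ZMod (2 * n)) + 1))) →
      -- `P` is the product measure: the `2 n` lattice sites are i.i.d. with law `μ`
      let P : Measure (ZMod (2 * n) → E) := Measure.pi fun _ => μ
      let Ubar : ℝ := ∫ ω, U 0 ω ∂P
      let Vbar : ℝ := ∫ ω, V 0 ω ∂P
      let βbar : ℝ := ∫ ω, βp 0 ω ∂P
      let σuu : ℝ := variance (U 0) P
      let σvv : ℝ := variance (V 0) P
      let σuv : ℝ := ∫ ω, (U 0 ω - Ubar) * (V 0 ω + V (-1) ω - 2 * Vbar) ∂P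
      let σββ : ℝ := ∫ ω, (βp 0 ω - βbar) * (βp (-1) ω + βp 0 ω + βp 1 ω - 3 * βbar) ∂P
      let σβu : ℝ := ∫ ω, (U 0 ω - Ubar) * (βp (-1) ω + βp 0 ω - 2 * βbar) ∂P
      let σβv : ℝ := ∫ ω, (V 0 ω - Vbar) * (βp (-1) ω + βp 0 ω - 2 * βbar) ∂P
      variance (fun ω => ∑ i : ZMod n, (U i ω + V i ω + cp * βp i ω + cm * βm i ω)) P
        = (n : ℝ) * (σuu + σvv + 2 * σuv + (cp ^ 2 + cm ^ 2) * σββ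
            + 2 * (cp + cm) * (σβu + σβv)) := by
  haveI hNZn : NeZero n := ⟨by omega⟩
  haveI hNZ2n : NeZero (2 * n) := ⟨by omega⟩
  haveI : Fact (1 < n) := ⟨by omega⟩
  intro U V βp βm hU hV hβp hβm P Ubar Vbar βbar σuu σvv σuv σββ σβu σβv
  classical
  -- basic facts
  have hInt : ∀ X : (ZMod (2 * n) → E) → ℝ, Integrable X P := fun X => Integrable.of_finite
  have hNE : ∀ a b : ℤ, a ≠ b → a - b < 2 * (n : ℤ) → b - a < 2 * (n : ℤ) →
      ((a : ZMod (2 * n)) ≠ (b : ZMod (2 * n))) := by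
    intro a b h1 h2 h3
    apply zmod_intCast_ne a b (by omega) <;> push_cast <;> omega
  -- the additive property of i ↦ 2 * i.val
  have hκmod : ∀ m : ℕ, ((2 * (m % n) : ℕ) : ZMod (2 * n)) = ((2 * m : ℕ) : ZMod (2 * n)) := by
    intro m
    obtain ⟨q, hq⟩ : ∃ q, 2 * m = 2 * n * q + 2 * (m % n) :=
      ⟨m / n, by
        conv_lhs => rw [← Nat.div_add_mod m n]
        ring⟩
    rw [hq, Nat.cast_add, Nat.cast_mul (2 * n) q, ZMod.natCast_self, zero_mul, zero_add]
  have hκadd : ∀ a k : ZMod n, 2 * (((a + k).val : ℕ) : ZMod (2 * n))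
      = 2 * ((a.val : ℕ) : ZMod (2 * n)) + 2 * ((k.val : ℕ) : ZMod (2 * n)) := by
    intro a k
    rw [ZMod.val_add]
    calc 2 * (((a.val + k.val) % n : ℕ) : ZMod (2 * n))
        = ((2 * ((a.val + k.val) % n) : ℕ) : ZMod (2 * n)) := by push_cast; ring
      _ = ((2 * (a.val + k.val) : ℕ) : ZMod (2 * n)) := hκmod _
      _ = 2 * ((a.val : ℕ) : ZMod (2 * n)) + 2 * ((k.val : ℕ) : ZMod (2 * n)) := by
          push_cast; ring
  have hv0 : 2 * (((0 : ZMod n)).val : ZMod (2 * n)) = 0 := by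
    simp [ZMod.val_zero]
  have hv1 : 2 * (((1 : ZMod n)).val : ZMod (2 * n)) = 2 := by
    rw [ZMod.val_one]; norm_num
  have hvm1 : 2 * (((-1 : ZMod n)).val : ZMod (2 * n)) = -2 := by
    have h := hκadd (-1) 1
    rw [neg_add_cancel, hv0, hv1] at h
    linear_combination -h
  have hvm2 : 2 * (((-2 : ZMod n)).val : ZMod (2 * n)) = -4 := by
    have h := hκadd (-1) (-1)
    rw [show (-1 + -1 : ZMod n) = -2 by ring, hvm1] at h
    linear_combination h
  have hκneg : ∀ i : ZMod n, 2 * (((-i : ZMod n)).val : ZMod (2 * n))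
      = -(2 * ((i.val : ℕ) : ZMod (2 * n))) := by
    intro i
    have h := hκadd i (-i)
    rw [add_neg_cancel, hv0] at h
    linear_combination -h
  have hκ1i : ∀ i : ZMod n, 2 * (((1 - i : ZMod n)).val : ZMod (2 * n))
      = 2 - 2 * ((i.val : ℕ) : ZMod (2 * n)) := by
    intro i
    have h := hκadd 1 (-i)
    rw [hκneg, hv1] at h
    rw [sub_eq_add_neg, h]
    ring
  -- normalized coordinate descriptions (integer coordinates)
  have hU0 : ∀ ω, U 0 ω = f (ω ((-1 : ℤ) : ZMod (2 * n)), ω ((0 : ℤ) : ZMod (2 * n))) := by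
    intro ω
    rw [hU, show 2 * (((0 : ZMod n)).val : ZMod (2 * n)) - 1 = ((-1 : ℤ) : ZMod (2 * n)) by
      rw [hv0]; push_cast; ring]
    rw [hv0, show (0 : ZMod (2 * n)) = ((0 : ℤ) : ZMod (2 * n)) by push_cast; ring]
  have hU1 : ∀ ω, U 1 ω = f (ω ((1 : ℤ) : ZMod (2 * n)), ω ((2 : ℤ) : ZMod (2 * n))) := by
    intro ω
    rw [hU, show 2 * (((1 : ZMod n)).val : ZMod (2 * n)) - 1 = ((1 : ℤ) : ZMod (2 * n)) by
      rw [hv1]; push_cast; ring]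
    rw [hv1, show (2 : ZMod (2 * n)) = ((2 : ℤ) : ZMod (2 * n)) by push_cast; ring]
  have hV0 : ∀ ω, V 0 ω = g (ω ((0 : ℤ) : ZMod (2 * n)), ω ((1 : ℤ) : ZMod (2 * n))) := by
    intro ω
    rw [hV, show 2 * (((0 : ZMod n)).val : ZMod (2 * n)) + 1 = ((1 : ℤ) : ZMod (2 * n)) by
      rw [hv0]; push_cast; ring]
    rw [hv0, show (0 : ZMod (2 * n)) = ((0 : ℤ) : ZMod (2 * n)) by push_cast; ring]
  have hV1 : ∀ ω, V 1 ω = g (ω ((2 : ℤ) : ZMod (2 * n)), ω ((3 : ℤ) : ZMod (2 * n))) := by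
    intro ω
    rw [hV, show 2 * (((1 : ZMod n)).val : ZMod (2 * n)) + 1 = ((3 : ℤ) : ZMod (2 * n)) by
      rw [hv1]; push_cast; ring]
    rw [hv1, show (2 : ZMod (2 * n)) = ((2 : ℤ) : ZMod (2 * n)) by push_cast; ring]
  have hB0 : ∀ ω, βp 0 ω = b (ω ((0 : ℤ) : ZMod (2 * n)), ω ((2 : ℤ) : ZMod (2 * n))) := by
    intro ω
    rw [hβp, show 2 * (((0 : ZMod n)).val : ZMod (2 * n)) + 2 = ((2 : ℤ) : ZMod (2 * n)) by
      rw [hv0]; push_cast; ring]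
    rw [hv0, show (0 : ZMod (2 * n)) = ((0 : ℤ) : ZMod (2 * n)) by push_cast; ring]
  have hB1 : ∀ ω, βp 1 ω = b (ω ((2 : ℤ) : ZMod (2 * n)), ω ((4 : ℤ) : ZMod (2 * n))) := by
    intro ω
    rw [hβp, show 2 * (((1 : ZMod n)).val : ZMod (2 * n)) + 2 = ((4 : ℤ) : ZMod (2 * n)) by
      rw [hv1]; push_cast; ring]
    rw [hv1, show (2 : ZMod (2 * n)) = ((2 : ℤ) : ZMod (2 * n)) by push_cast; ring]
  have hBm1 : ∀ ω, βp (-1) ω = b (ω ((-2 : ℤ) : ZMod (2 * n)), ω ((0 : ℤ) : ZMod (2 * n))) := by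
    intro ω
    rw [hβp, show 2 * (((-1 : ZMod n)).val : ZMod (2 * n)) + 2 = ((0 : ℤ) : ZMod (2 * n)) by
      rw [hvm1]; push_cast; ring]
    rw [hvm1, show (-2 : ZMod (2 * n)) = ((-2 : ℤ) : ZMod (2 * n)) by push_cast; ring]
  have hBm2 : ∀ ω, βp (-2) ω = b (ω ((-4 : ℤ) : ZMod (2 * n)), ω ((-2 : ℤ) : ZMod (2 * n))) := by
    intro ω
    rw [hβp, show 2 * (((-2 : ZMod n)).val : ZMod (2 * n)) + 2 = ((-2 : ℤ) : ZMod (2 * n)) by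
      rw [hvm2]; push_cast; ring]
    rw [hvm2, show (-4 : ZMod (2 * n)) = ((-4 : ℤ) : ZMod (2 * n)) by push_cast; ring]
  have hM0 : ∀ ω, βm 0 ω = b (ω ((-1 : ℤ) : ZMod (2 * n)), ω ((1 : ℤ) : ZMod (2 * n))) := by
    intro ω
    rw [hβm, show 2 * (((0 : ZMod n)).val : ZMod (2 * n)) - 1 = ((-1 : ℤ) : ZMod (2 * n)) by
      rw [hv0]; push_cast; ring]
    rw [show 2 * (((0 : ZMod n)).val : ZMod (2 * n)) + 1 = ((1 : ℤ) : ZMod (2 * n)) by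
      rw [hv0]; push_cast; ring]
  have hM1 : ∀ ω, βm 1 ω = b (ω ((1 : ℤ) : ZMod (2 * n)), ω ((3 : ℤ) : ZMod (2 * n))) := by
    intro ω
    rw [hβm, show 2 * (((1 : ZMod n)).val : ZMod (2 * n)) - 1 = ((1 : ℤ) : ZMod (2 * n)) by
      rw [hv1]; push_cast; ring]
    rw [show 2 * (((1 : ZMod n)).val : ZMod (2 * n)) + 1 = ((3 : ℤ) : ZMod (2 * n)) by
      rw [hv1]; push_cast; ring]
  have hMm1 : ∀ ω, βm (-1) ω = b (ω ((-3 : ℤ) : ZMod (2 * n)), ω ((-1 : ℤ) : ZMod (2 * n))) := by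
    intro ω
    rw [hβm, show 2 * (((-1 : ZMod n)).val : ZMod (2 * n)) - 1 = ((-3 : ℤ) : ZMod (2 * n)) by
      rw [hvm1]; push_cast; ring]
    rw [show 2 * (((-1 : ZMod n)).val : ZMod (2 * n)) + 1 = ((-1 : ℤ) : ZMod (2 * n)) by
      rw [hvm1]; push_cast; ring]
  -- covariance
  set cov : ((ZMod (2 * n) → E) → ℝ) → ((ZMod (2 * n) → E) → ℝ) → ℝ :=
    fun X Y => (∫ ω, X ω * Y ω ∂P) - (∫ ω, X ω ∂P) * (∫ ω, Y ω ∂P) with hcov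
  have hcsymm : ∀ X Y, cov X Y = cov Y X := by
    intro X Y
    simp only [hcov]
    rw [show (fun ω => X ω * Y ω) = (fun ω => Y ω * X ω) from funext fun ω => mul_comm _ _]
    ring
  -- vanishing of covariance for variables with disjoint coordinates
  have hzero : ∀ (X Y : (ZMod (2 * n) → E) → ℝ) (F G : E × E → ℝ) (x1 x2 y1 y2 : ℤ),
      (∀ ω, X ω = F (ω (x1 : ZMod (2 * n)), ω (x2 : ZMod (2 * n)))) →
      (∀ ω, Y ω = G (ω (y1 : ZMod (2 * n)), ω (y2 : ZMod (2 * n)))) →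
      ((x1 : ZMod (2 * n)) ≠ (y1 : ZMod (2 * n))) →
      ((x1 : ZMod (2 * n)) ≠ (y2 : ZMod (2 * n))) →
      ((x2 : ZMod (2 * n)) ≠ (y1 : ZMod (2 * n))) →
      ((x2 : ZMod (2 * n)) ≠ (y2 : ZMod (2 * n))) →
      cov X Y = 0 := by
    intro X Y F G x1 x2 y1 y2 hXF hYG h11 h12 h21 h22
    simp only [hcov]
    rw [sub_eq_zero]
    apply integral_mul_of_disjoint μ
      ({(x1 : ZMod (2 * n)), (x2 : ZMod (2 * n))} : Finset (ZMod (2 * n)))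
      ({(y1 : ZMod (2 * n)), (y2 : ZMod (2 * n))} : Finset (ZMod (2 * n)))
    · rw [Finset.disjoint_left]
      intro a ha hb
      simp only [Finset.mem_insert, Finset.mem_singleton] at ha hb
      rcases ha with rfl | rfl <;> rcases hb with h | h <;>
        first
          | exact h11 h | exact h12 h | exact h21 h | exact h22 h
    · intro ω ω' hagree
      rw [hXF, hXF, hagree _ (by simp), hagree _ (by simp)]
    · intro ω ω' hagree
      rw [hYG, hYG, hagree _ (by simp), hagree _ (by simp)]
  -- shift invariance
  have hIshift : ∀ (e : ZMod (2 * n) ≃ ZMod (2 * n)) (X : (ZMod (2 * n) → E) → ℝ),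
      ∫ ω, X (fun j => ω (e j)) ∂P = ∫ ω, X ω ∂P :=
    fun e X => integral_reindex μ e X
  have hshU : ∀ (i k : ZMod n) ω,
      U i (fun j => ω (j + 2 * ((k.val : ℕ) : ZMod (2 * n)))) = U (i + k) ω := by
    intro i k ω
    rw [hU, hU]
    simp only [hκadd]
    ring_nf
  have hshV : ∀ (i k : ZMod n) ω,
      V i (fun j => ω (j + 2 * ((k.val : ℕ) : ZMod (2 * n)))) = V (i + k) ω := by
    intro i k ω
    rw [hV, hV]
    simp only [hκadd]
    ring_nf
  have hshB : ∀ (i k : ZMod n) ω,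
      βp i (fun j => ω (j + 2 * ((k.val : ℕ) : ZMod (2 * n)))) = βp (i + k) ω := by
    intro i k ω
    rw [hβp, hβp]
    simp only [hκadd]
    ring_nf
  have hshM : ∀ (i k : ZMod n) ω,
      βm i (fun j => ω (j + 2 * ((k.val : ℕ) : ZMod (2 * n)))) = βm (i + k) ω := by
    intro i k ω
    rw [hβm, hβm]
    simp only [hκadd]
    ring_nf
  -- shift invariance of covariances
  have hmean : ∀ (X : ZMod n → (ZMod (2 * n) → E) → ℝ),
      (∀ (i k : ZMod n) ω, X i (fun j => ω (j + 2 * ((k.val : ℕ) : ZMod (2 * n)))) = X (i + k) ω) →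
      ∀ i, ∫ ω, X i ω ∂P = ∫ ω, X 0 ω ∂P := by
    intro X hX i
    have h := hIshift (Equiv.addRight (2 * ((i.val : ℕ) : ZMod (2 * n)))) (X 0)
    simp only [Equiv.coe_addRight] at h
    calc ∫ ω, X i ω ∂P = ∫ ω, X (0 + i) ω ∂P := by rw [zero_add]
      _ = ∫ ω, X 0 (fun j => ω (j + 2 * ((i.val : ℕ) : ZMod (2 * n)))) ∂P :=
          integral_congr_ae (Filter.Eventually.of_forall fun ω => (hX 0 i ω).symm)
      _ = ∫ ω, X 0 ω ∂P := h
  have hcshift : ∀ (X Y : ZMod n → (ZMod (2 * n) → E) → ℝ),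
      (∀ (i k : ZMod n) ω, X i (fun j => ω (j + 2 * ((k.val : ℕ) : ZMod (2 * n)))) = X (i + k) ω) →
      (∀ (i k : ZMod n) ω, Y i (fun j => ω (j + 2 * ((k.val : ℕ) : ZMod (2 * n)))) = Y (i + k) ω) →
      ∀ i j k, cov (X (i + k)) (Y (j + k)) = cov (X i) (Y j) := by
    intro X Y hX hY i j k
    simp only [hcov]
    have h1 := hIshift (Equiv.addRight (2 * ((k.val : ℕ) : ZMod (2 * n))))
      (fun ω => X i ω * Y j ω)
    simp only [Equiv.coe_addRight] at h1
    have e1 : ∫ ω, X (i + k) ω * Y (j + k) ω ∂P = ∫ ω, X i ω * Y j ω ∂P := by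
      rw [← h1]
      exact integral_congr_ae (Filter.Eventually.of_forall fun ω => by
        simp only [hX, hY])
    have h2 := hIshift (Equiv.addRight (2 * ((k.val : ℕ) : ZMod (2 * n)))) (X i)
    simp only [Equiv.coe_addRight] at h2
    have e2 : ∫ ω, X (i + k) ω ∂P = ∫ ω, X i ω ∂P := by
      rw [← h2]
      exact integral_congr_ae (Filter.Eventually.of_forall fun ω => by simp only [hX])
    have h3 := hIshift (Equiv.addRight (2 * ((k.val : ℕ) : ZMod (2 * n)))) (Y j)
    simp only [Equiv.coe_addRight] at h3
    have e3 : ∫ ω, Y (j + k) ω ∂P = ∫ ω, Y j ω ∂P := by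
      rw [← h3]
      exact integral_congr_ae (Filter.Eventually.of_forall fun ω => by simp only [hY])
    rw [e1, e2, e3]
  have hto0 : ∀ (X Y : ZMod n → (ZMod (2 * n) → E) → ℝ),
      (∀ (i k : ZMod n) ω, X i (fun j => ω (j + 2 * ((k.val : ℕ) : ZMod (2 * n)))) = X (i + k) ω) →
      (∀ (i k : ZMod n) ω, Y i (fun j => ω (j + 2 * ((k.val : ℕ) : ZMod (2 * n)))) = Y (i + k) ω) →
      ∀ i j, cov (X i) (Y j) = cov (X 0) (Y (j - i)) := by
    intro X Y hX hY i j
    have h := hcshift X Y hX hY 0 (j - i) i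
    rw [zero_add, sub_add_cancel] at h
    exact h
  -- reflection invariance
  have hrU : ∀ (i : ZMod n) ω, U i (fun j => ω (1 - j)) = U (1 - i) ω := by
    intro i ω
    rw [hU, hU]
    simp only [hκ1i]
    rw [hf]
    ring_nf
  have hrV : ∀ (i : ZMod n) ω, V i (fun j => ω (1 - j)) = V (-i) ω := by
    intro i ω
    rw [hV, hV]
    simp only [hκneg]
    rw [hg]
    ring_nf
  have hrB : ∀ (i : ZMod n) ω, βp i (fun j => ω (1 - j)) = βm (-i) ω := by
    intro i ω
    rw [hβp, hβm]
    simp only [hκneg]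
    rw [hb]
    ring_nf
  have hrM : ∀ (i : ZMod n) ω, βm i (fun j => ω (1 - j)) = βp (-i) ω := by
    intro i ω
    rw [hβm, hβp]
    simp only [hκneg]
    rw [hb]
    ring_nf
  have hcrefl : ∀ (A B A' B' : (ZMod (2 * n) → E) → ℝ),
      (∀ ω, A (fun j => ω (1 - j)) = A' ω) → (∀ ω, B (fun j => ω (1 - j)) = B' ω) →
      cov A' B' = cov A B := by
    intro A B A' B' hA hB
    simp only [hcov]
    have h1 := hIshift (Equiv.subLeft (1 : ZMod (2 * n))) (fun ω => A ω * B ω)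
    simp only [Equiv.subLeft_apply] at h1
    have e1 : ∫ ω, A' ω * B' ω ∂P = ∫ ω, A ω * B ω ∂P := by
      rw [← h1]
      exact integral_congr_ae (Filter.Eventually.of_forall fun ω => by simp only [hA, hB])
    have h2 := hIshift (Equiv.subLeft (1 : ZMod (2 * n))) A
    simp only [Equiv.subLeft_apply] at h2
    have e2 : ∫ ω, A' ω ∂P = ∫ ω, A ω ∂P := by
      rw [← h2]
      exact integral_congr_ae (Filter.Eventually.of_forall fun ω => by simp only [hA])
    have h3 := hIshift (Equiv.subLeft (1 : ZMod (2 * n))) B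
    simp only [Equiv.subLeft_apply] at h3
    have e3 : ∫ ω, B' ω ∂P = ∫ ω, B ω ∂P := by
      rw [← h3]
      exact integral_congr_ae (Filter.Eventually.of_forall fun ω => by simp only [hB])
    rw [e1, e2, e3]
  have zUU1 : cov (U 0) (U 1) = 0 :=
    hzero _ _ f f (-1) 0 1 2 hU0 hU1 (hNE _ _ (by norm_num) (by omega) (by omega)) (hNE _ _ (by norm_num) (by omega) (by omega)) (hNE _ _ (by norm_num) (by omega) (by omega)) (hNE _ _ (by norm_num) (by omega) (by omega))
  have zUV1 : cov (U 0) (V 1) = 0 :=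
    hzero _ _ f g (-1) 0 2 3 hU0 hV1 (hNE _ _ (by norm_num) (by omega) (by omega)) (hNE _ _ (by norm_num) (by omega) (by omega)) (hNE _ _ (by norm_num) (by omega) (by omega)) (hNE _ _ (by norm_num) (by omega) (by omega))
  have zUB1 : cov (U 0) (βp 1) = 0 :=
    hzero _ _ f b (-1) 0 2 4 hU0 hB1 (hNE _ _ (by norm_num) (by omega) (by omega)) (hNE _ _ (by norm_num) (by omega) (by omega)) (hNE _ _ (by norm_num) (by omega) (by omega)) (hNE _ _ (by norm_num) (by omega) (by omega))
  have zUBm2 : cov (U 0) (βp (-2)) = 0 :=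
    hzero _ _ f b (-1) 0 (-4) (-2) hU0 hBm2 (hNE _ _ (by norm_num) (by omega) (by omega)) (hNE _ _ (by norm_num) (by omega) (by omega)) (hNE _ _ (by norm_num) (by omega) (by omega)) (hNE _ _ (by norm_num) (by omega) (by omega))
  have zVV1 : cov (V 0) (V 1) = 0 :=
    hzero _ _ g g 0 1 2 3 hV0 hV1 (hNE _ _ (by norm_num) (by omega) (by omega)) (hNE _ _ (by norm_num) (by omega) (by omega)) (hNE _ _ (by norm_num) (by omega) (by omega)) (hNE _ _ (by norm_num) (by omega) (by omega))
  have zVB1 : cov (V 0) (βp 1) = 0 :=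
    hzero _ _ g b 0 1 2 4 hV0 hB1 (hNE _ _ (by norm_num) (by omega) (by omega)) (hNE _ _ (by norm_num) (by omega) (by omega)) (hNE _ _ (by norm_num) (by omega) (by omega)) (hNE _ _ (by norm_num) (by omega) (by omega))
  have zBMm1 : cov (βp 0) (βm (-1)) = 0 :=
    hzero _ _ b b 0 2 (-3) (-1) hB0 hMm1 (hNE _ _ (by norm_num) (by omega) (by omega)) (hNE _ _ (by norm_num) (by omega) (by omega)) (hNE _ _ (by norm_num) (by omega) (by omega)) (hNE _ _ (by norm_num) (by omega) (by omega))
  have zBM0 : cov (βp 0) (βm 0) = 0 :=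
    hzero _ _ b b 0 2 (-1) 1 hB0 hM0 (hNE _ _ (by norm_num) (by omega) (by omega)) (hNE _ _ (by norm_num) (by omega) (by omega)) (hNE _ _ (by norm_num) (by omega) (by omega)) (hNE _ _ (by norm_num) (by omega) (by omega))
  have zBM1 : cov (βp 0) (βm 1) = 0 :=
    hzero _ _ b b 0 2 1 3 hB0 hM1 (hNE _ _ (by norm_num) (by omega) (by omega)) (hNE _ _ (by norm_num) (by omega) (by omega)) (hNE _ _ (by norm_num) (by omega) (by omega)) (hNE _ _ (by norm_num) (by omega) (by omega))
  have zMBm1 : cov (βm 0) (βp (-1)) = 0 :=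
    hzero _ _ b b (-1) 1 (-2) 0 hM0 hBm1 (hNE _ _ (by norm_num) (by omega) (by omega)) (hNE _ _ (by norm_num) (by omega) (by omega)) (hNE _ _ (by norm_num) (by omega) (by omega)) (hNE _ _ (by norm_num) (by omega) (by omega))
  have zMB0 : cov (βm 0) (βp 0) = 0 :=
    hzero _ _ b b (-1) 1 0 2 hM0 hB0 (hNE _ _ (by norm_num) (by omega) (by omega)) (hNE _ _ (by norm_num) (by omega) (by omega)) (hNE _ _ (by norm_num) (by omega) (by omega)) (hNE _ _ (by norm_num) (by omega) (by omega))
  have zMB1 : cov (βm 0) (βp 1) = 0 :=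
    hzero _ _ b b (-1) 1 2 4 hM0 hB1 (hNE _ _ (by norm_num) (by omega) (by omega)) (hNE _ _ (by norm_num) (by omega) (by omega)) (hNE _ _ (by norm_num) (by omega) (by omega)) (hNE _ _ (by norm_num) (by omega) (by omega))
  -- reflected / shifted component identities
  have hrU1 : ∀ ω, U 1 (fun j => ω (1 - j)) = U 0 ω := fun ω => by
    have h := hrU 1 ω; rwa [show (1 - 1 : ZMod n) = 0 by ring] at h
  have hrU1d : ∀ (d : ZMod n) ω, U (1 - d) (fun j => ω (1 - j)) = U d ω := fun d ω => by
    have h := hrU (1 - d) ω; rwa [show (1 - (1 - d) : ZMod n) = d by ring] at h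
  have hrV' : ∀ (d : ZMod n) ω, V (-d) (fun j => ω (1 - j)) = V d ω := fun d ω => by
    have h := hrV (-d) ω; rwa [neg_neg] at h
  have hrB' : ∀ (d : ZMod n) ω, βp (-d) (fun j => ω (1 - j)) = βm d ω := fun d ω => by
    have h := hrB (-d) ω; rwa [neg_neg] at h
  have hrV0 : ∀ ω, V 0 (fun j => ω (1 - j)) = V 0 ω := fun ω => by
    have h := hrV 0 ω; rwa [neg_zero] at h
  have hrB0 : ∀ ω, βp 0 (fun j => ω (1 - j)) = βm 0 ω := fun ω => by
    have h := hrB 0 ω; rwa [neg_zero] at h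
  -- atomic covariance reductions
  have eUU : cov (U 0) (U (-1)) = 0 := by
    rw [hcsymm, hto0 U U hshU hshU (-1) 0, show (0 - (-1) : ZMod n) = 1 by ring]
    exact zUU1
  have eVV : cov (V 0) (V (-1)) = 0 := by
    rw [hcsymm, hto0 V V hshV hshV (-1) 0, show (0 - (-1) : ZMod n) = 1 by ring]
    exact zVV1
  have eVU1 : cov (V 0) (U 1) = cov (U 0) (V (-1)) := by
    rw [hcsymm, hto0 U V hshU hshV 1 0, show (0 - 1 : ZMod n) = -1 by ring]
  have eVUm1 : cov (V 0) (U (-1)) = 0 := by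
    rw [hcsymm, hto0 U V hshU hshV (-1) 0, show (0 - (-1) : ZMod n) = 1 by ring]
    exact zUV1
  have eBU1 : cov (βp 0) (U 1) = cov (U 0) (βp (-1)) := by
    rw [hcsymm, hto0 U βp hshU hshB 1 0, show (0 - 1 : ZMod n) = -1 by ring]
  have eBUm1 : cov (βp 0) (U (-1)) = 0 := by
    rw [hcsymm, hto0 U βp hshU hshB (-1) 0, show (0 - (-1) : ZMod n) = 1 by ring]
    exact zUB1
  have eBV1 : cov (βp 0) (V 1) = cov (V 0) (βp (-1)) := by
    rw [hcsymm, hto0 V βp hshV hshB 1 0, show (0 - 1 : ZMod n) = -1 by ring]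
  have eBVm1 : cov (βp 0) (V (-1)) = 0 := by
    rw [hcsymm, hto0 V βp hshV hshB (-1) 0, show (0 - (-1) : ZMod n) = 1 by ring]
    exact zVB1
  have eBU0 : cov (βp 0) (U 0) = cov (U 0) (βp 0) := hcsymm _ _
  have eBV0 : cov (βp 0) (V 0) = cov (V 0) (βp 0) := hcsymm _ _
  have eVU0 : cov (V 0) (U 0) = cov (U 0) (V 0) := hcsymm _ _
  -- reflection-based reductions for βm
  have mU : ∀ d : ZMod n, cov (U 0) (βm d) = cov (U 0) (βp (-d - 1)) := by
    intro d
    rw [hcrefl (U 1) (βp (-d)) (U 0) (βm d) hrU1 (hrB' d),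
      hto0 U βp hshU hshB 1 (-d)]
  have mV : ∀ d : ZMod n, cov (V 0) (βm d) = cov (V 0) (βp (-d)) := by
    intro d
    rw [hcrefl (V 0) (βp (-d)) (V 0) (βm d) hrV0 (hrB' d)]
  have mMU : ∀ d : ZMod n, cov (βm 0) (U d) = cov (U 0) (βp (d - 1)) := by
    intro d
    rw [hcsymm, hcrefl (U (1 - d)) (βp 0) (U d) (βm 0) (hrU1d d) hrB0,
      hto0 U βp hshU hshB (1 - d) 0, show (0 - (1 - d) : ZMod n) = d - 1 by ring]
  have mMV : ∀ d : ZMod n, cov (βm 0) (V d) = cov (V 0) (βp d) := by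
    intro d
    rw [hcsymm, hcrefl (V (-d)) (βp 0) (V d) (βm 0) (hrV' d) hrB0,
      hto0 V βp hshV hshB (-d) 0, show (0 - (-d) : ZMod n) = d by ring]
  have mMM : ∀ d : ZMod n, cov (βm 0) (βm d) = cov (βp 0) (βp (-d)) := by
    intro d
    rw [hcrefl (βp 0) (βp (-d)) (βm 0) (βm d) hrB0 (hrB' d)]
  -- the total supercell summand
  set W : ZMod n → (ZMod (2 * n) → E) → ℝ :=
    fun i ω => U i ω + V i ω + cp * βp i ω + cm * βm i ω with hW
  have hshW : ∀ (i k : ZMod n) ω,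
      W i (fun j => ω (j + 2 * ((k.val : ℕ) : ZMod (2 * n)))) = W (i + k) ω := by
    intro i k ω
    simp only [hW]
    rw [hshU, hshV, hshB, hshM]
  -- bilinearity of covariance
  have hca : ∀ X Y Z : (ZMod (2 * n) → E) → ℝ,
      cov (fun ω => X ω + Y ω) Z = cov X Z + cov Y Z := by
    intro X Y Z
    simp only [hcov]
    rw [show (fun ω => (X ω + Y ω) * Z ω) = fun ω => X ω * Z ω + Y ω * Z ω from
        funext fun ω => by ring,
      integral_add (hInt _) (hInt _), integral_add (hInt _) (hInt _)]
    ring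
  have hcs : ∀ (r : ℝ) (X Z : (ZMod (2 * n) → E) → ℝ),
      cov (fun ω => r * X ω) Z = r * cov X Z := by
    intro r X Z
    simp only [hcov]
    rw [show (fun ω => (r * X ω) * Z ω) = fun ω => r * (X ω * Z ω) from
        funext fun ω => by ring,
      integral_const_mul, integral_const_mul]
    ring
  have hca' : ∀ X Y Z : (ZMod (2 * n) → E) → ℝ,
      cov Z (fun ω => X ω + Y ω) = cov Z X + cov Z Y := by
    intro X Y Z
    rw [hcsymm, hca, hcsymm X Z, hcsymm Y Z]
  have hcs' : ∀ (r : ℝ) (X Z : (ZMod (2 * n) → E) → ℝ),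
      cov Z (fun ω => r * X ω) = r * cov Z X := by
    intro r X Z
    rw [hcsymm, hcs, hcsymm X Z]
  have hcW : ∀ i j : ZMod n, cov (W i) (W j)
      = cov (U i) (U j) + cov (U i) (V j) + cp * cov (U i) (βp j) + cm * cov (U i) (βm j)
      + cov (V i) (U j) + cov (V i) (V j) + cp * cov (V i) (βp j) + cm * cov (V i) (βm j)
      + cp * cov (βp i) (U j) + cp * cov (βp i) (V j)
      + cp * (cp * cov (βp i) (βp j)) + cp * (cm * cov (βp i) (βm j))
      + cm * cov (βm i) (U j) + cm * cov (βm i) (V j)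
      + cm * (cp * cov (βm i) (βp j)) + cm * (cm * cov (βm i) (βm j)) := by
    intro i j
    simp only [hW]
    simp only [hca, hca', hcs, hcs']
    ring
  -- vanishing of covariances of distant blocks
  have hblock : ∀ d : ZMod n, d ∉ ({-1, 0, 1} : Finset (ZMod n)) → cov (W 0) (W d) = 0 := by
    intro d hd
    simp only [Finset.mem_insert, Finset.mem_singleton] at hd
    push_neg at hd
    obtain ⟨hd1, hd2, hd3⟩ := hd
    have hdval : ((d.val : ℕ) : ZMod n) = d := ZMod.natCast_rightInverse d
    have hmlt : d.val < n := ZMod.val_lt d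
    have hm0 : d.val ≠ 0 := by
      intro h
      exact hd2 (by rw [← hdval, h]; simp)
    have hm1 : d.val ≠ 1 := by
      intro h
      exact hd3 (by rw [← hdval, h]; simp)
    have hcastn1 : ((n - 1 : ℕ) : ZMod n) = -1 := by
      rw [Nat.cast_sub (by omega : 1 ≤ n), ZMod.natCast_self]
      ring
    have hmn1 : d.val ≠ n - 1 := by
      intro h
      exact hd1 (by rw [← hdval, h, hcastn1])
    have hm2 : 2 ≤ d.val := by omega
    have hmn2 : d.val ≤ n - 2 := by omega
    -- coordinates of the d-th block
    have hUd : ∀ ω, U d ω = f (ω ((2 * (d.val : ℤ) - 1 : ℤ) : ZMod (2 * n)),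
        ω ((2 * (d.val : ℤ) : ℤ) : ZMod (2 * n))) := by
      intro ω
      rw [hU, show 2 * ((d.val : ℕ) : ZMod (2 * n)) - 1
          = ((2 * (d.val : ℤ) - 1 : ℤ) : ZMod (2 * n)) by push_cast; ring]
      rw [show 2 * ((d.val : ℕ) : ZMod (2 * n))
          = ((2 * (d.val : ℤ) : ℤ) : ZMod (2 * n)) by push_cast; ring]
    have hVd : ∀ ω, V d ω = g (ω ((2 * (d.val : ℤ) : ℤ) : ZMod (2 * n)),
        ω ((2 * (d.val : ℤ) + 1 : ℤ) : ZMod (2 * n))) := by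
      intro ω
      rw [hV, show 2 * ((d.val : ℕ) : ZMod (2 * n)) + 1
          = ((2 * (d.val : ℤ) + 1 : ℤ) : ZMod (2 * n)) by push_cast; ring]
      rw [show 2 * ((d.val : ℕ) : ZMod (2 * n))
          = ((2 * (d.val : ℤ) : ℤ) : ZMod (2 * n)) by push_cast; ring]
    have hBd : ∀ ω, βp d ω = b (ω ((2 * (d.val : ℤ) : ℤ) : ZMod (2 * n)),
        ω ((2 * (d.val : ℤ) + 2 : ℤ) : ZMod (2 * n))) := by
      intro ω
      rw [hβp, show 2 * ((d.val : ℕ) : ZMod (2 * n)) + 2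
          = ((2 * (d.val : ℤ) + 2 : ℤ) : ZMod (2 * n)) by push_cast; ring]
      rw [show 2 * ((d.val : ℕ) : ZMod (2 * n))
          = ((2 * (d.val : ℤ) : ℤ) : ZMod (2 * n)) by push_cast; ring]
    have hMd : ∀ ω, βm d ω = b (ω ((2 * (d.val : ℤ) - 1 : ℤ) : ZMod (2 * n)),
        ω ((2 * (d.val : ℤ) + 1 : ℤ) : ZMod (2 * n))) := by
      intro ω
      rw [hβm, show 2 * ((d.val : ℕ) : ZMod (2 * n)) - 1
          = ((2 * (d.val : ℤ) - 1 : ℤ) : ZMod (2 * n)) by push_cast; ring]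
      rw [show 2 * ((d.val : ℕ) : ZMod (2 * n)) + 1
          = ((2 * (d.val : ℤ) + 1 : ℤ) : ZMod (2 * n)) by push_cast; ring]
    simp only [hcov]
    rw [sub_eq_zero]
    apply integral_mul_of_disjoint μ
      ({((-1 : ℤ) : ZMod (2 * n)), ((0 : ℤ) : ZMod (2 * n)),
        ((1 : ℤ) : ZMod (2 * n)), ((2 : ℤ) : ZMod (2 * n))} : Finset (ZMod (2 * n)))
      ({((2 * (d.val : ℤ) - 1 : ℤ) : ZMod (2 * n)), ((2 * (d.val : ℤ) : ℤ) : ZMod (2 * n)),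
        ((2 * (d.val : ℤ) + 1 : ℤ) : ZMod (2 * n)),
        ((2 * (d.val : ℤ) + 2 : ℤ) : ZMod (2 * n))} : Finset (ZMod (2 * n)))
    · rw [Finset.disjoint_left]
      intro a ha hb
      simp only [Finset.mem_insert, Finset.mem_singleton] at ha hb
      rcases ha with rfl | rfl | rfl | rfl <;> rcases hb with h | h | h | h <;>
        exact hNE _ _ (by omega) (by omega) (by omega) h
    · intro ω ω' hag
      have h1 := hag _ (show ((-1 : ℤ) : ZMod (2 * n)) ∈ _ by
        simp only [Finset.mem_insert, Finset.mem_singleton]; tauto)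
      have h2 := hag _ (show ((0 : ℤ) : ZMod (2 * n)) ∈ _ by
        simp only [Finset.mem_insert, Finset.mem_singleton]; tauto)
      have h3 := hag _ (show ((1 : ℤ) : ZMod (2 * n)) ∈ _ by
        simp only [Finset.mem_insert, Finset.mem_singleton]; tauto)
      have h4 := hag _ (show ((2 : ℤ) : ZMod (2 * n)) ∈ _ by
        simp only [Finset.mem_insert, Finset.mem_singleton]; tauto)
      simp only [hW, hU0, hV0, hB0, hM0]
      rw [h1, h2, h3, h4]
    · intro ω ω' hag
      have h1 := hag _ (show ((2 * (d.val : ℤ) - 1 : ℤ) : ZMod (2 * n)) ∈ _ by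
        simp only [Finset.mem_insert, Finset.mem_singleton]; tauto)
      have h2 := hag _ (show ((2 * (d.val : ℤ) : ℤ) : ZMod (2 * n)) ∈ _ by
        simp only [Finset.mem_insert, Finset.mem_singleton]; tauto)
      have h3 := hag _ (show ((2 * (d.val : ℤ) + 1 : ℤ) : ZMod (2 * n)) ∈ _ by
        simp only [Finset.mem_insert, Finset.mem_singleton]; tauto)
      have h4 := hag _ (show ((2 * (d.val : ℤ) + 2 : ℤ) : ZMod (2 * n)) ∈ _ by
        simp only [Finset.mem_insert, Finset.mem_singleton]; tauto)
      simp only [hW, hUd, hVd, hBd, hMd]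
      rw [h1, h2, h3, h4]
  -- means
  have hUbar : ∫ ω, U 0 ω ∂P = Ubar := rfl
  have hVbar : ∫ ω, V 0 ω ∂P = Vbar := rfl
  have hβbar : ∫ ω, βp 0 ω ∂P = βbar := rfl
  have hmeanV : ∀ i, ∫ ω, V i ω ∂P = Vbar := fun i => hmean V hshV i
  have hmeanB : ∀ i, ∫ ω, βp i ω ∂P = βbar := fun i => hmean βp hshB i
  -- expansion of centered products
  have hcent : ∀ (X Y : (ZMod (2 * n) → E) → ℝ) (r s : ℝ),
      ∫ ω, (X ω - r) * (Y ω - s) ∂P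
        = (∫ ω, X ω * Y ω ∂P) - r * (∫ ω, Y ω ∂P) - s * (∫ ω, X ω ∂P) + r * s := by
    intro X Y r s
    rw [show (fun ω => (X ω - r) * (Y ω - s))
        = fun ω => (X ω * Y ω - r * Y ω - s * X ω) + r * s from funext fun ω => by ring,
      integral_add (hInt _) (hInt _),
      integral_sub (hInt _) (hInt _),
      integral_sub (hInt _) (hInt _),
      integral_const_mul, integral_const_mul, integral_const]
    simp [measure_univ]
  -- the σ quantities as covariances
  have hσuu : σuu = cov (U 0) (U 0) := by
    have h : σuu = variance (U 0) P := rfl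
    rw [h, variance_eq_sub MemLp.of_discrete]
    have h2 : ∫ ω, (U 0 ^ 2) ω ∂P = ∫ ω, U 0 ω * U 0 ω ∂P :=
      integral_congr_ae (Filter.Eventually.of_forall fun ω => by simp [pow_two])
    simp only [hcov]
    rw [h2]
    ring
  have hσvv : σvv = cov (V 0) (V 0) := by
    have h : σvv = variance (V 0) P := rfl
    rw [h, variance_eq_sub MemLp.of_discrete]
    have h2 : ∫ ω, (V 0 ^ 2) ω ∂P = ∫ ω, V 0 ω * V 0 ω ∂P :=
      integral_congr_ae (Filter.Eventually.of_forall fun ω => by simp [pow_two])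
    simp only [hcov]
    rw [h2]
    ring
  have hσuv : σuv = cov (U 0) (V 0) + cov (U 0) (V (-1)) := by
    have h : σuv = ∫ ω, (U 0 ω - Ubar) * ((fun ω => V 0 ω + V (-1) ω) ω - 2 * Vbar) ∂P := rfl
    rw [h, hcent (U 0) (fun ω => V 0 ω + V (-1) ω) Ubar (2 * Vbar)]
    rw [show (fun ω => U 0 ω * (V 0 ω + V (-1) ω))
        = fun ω => U 0 ω * V 0 ω + U 0 ω * V (-1) ω from funext fun ω => by ring,
      integral_add (hInt _) (hInt _), integral_add (hInt _) (hInt _)]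
    simp only [hcov]
    simp only [hmeanV, hmeanB, hUbar, hVbar, hβbar]
    ring
  have hσββ : σββ = cov (βp 0) (βp (-1)) + cov (βp 0) (βp 0) + cov (βp 0) (βp 1) := by
    have h : σββ = ∫ ω, (βp 0 ω - βbar)
        * ((fun ω => βp (-1) ω + βp 0 ω + βp 1 ω) ω - 3 * βbar) ∂P := rfl
    rw [h, hcent (βp 0) (fun ω => βp (-1) ω + βp 0 ω + βp 1 ω) βbar (3 * βbar)]
    rw [show (fun ω => βp 0 ω * (βp (-1) ω + βp 0 ω + βp 1 ω))
        = fun ω => (βp 0 ω * βp (-1) ω + βp 0 ω * βp 0 ω) + βp 0 ω * βp 1 ω from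
        funext fun ω => by ring,
      integral_add (hInt _) (hInt _), integral_add (hInt _) (hInt _),
      integral_add (hInt _) (hInt _), integral_add (hInt _) (hInt _)]
    simp only [hcov]
    simp only [hmeanV, hmeanB, hUbar, hVbar, hβbar]
    ring
  have hσβu : σβu = cov (U 0) (βp (-1)) + cov (U 0) (βp 0) := by
    have h : σβu = ∫ ω, (U 0 ω - Ubar) * ((fun ω => βp (-1) ω + βp 0 ω) ω - 2 * βbar) ∂P := rfl
    rw [h, hcent (U 0) (fun ω => βp (-1) ω + βp 0 ω) Ubar (2 * βbar)]
    rw [show (fun ω => U 0 ω * (βp (-1) ω + βp 0 ω))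
        = fun ω => U 0 ω * βp (-1) ω + U 0 ω * βp 0 ω from funext fun ω => by ring,
      integral_add (hInt _) (hInt _), integral_add (hInt _) (hInt _)]
    simp only [hcov]
    simp only [hmeanV, hmeanB, hUbar, hVbar, hβbar]
    ring
  have hσβv : σβv = cov (V 0) (βp (-1)) + cov (V 0) (βp 0) := by
    have h : σβv = ∫ ω, (V 0 ω - Vbar) * ((fun ω => βp (-1) ω + βp 0 ω) ω - 2 * βbar) ∂P := rfl
    rw [h, hcent (V 0) (fun ω => βp (-1) ω + βp 0 ω) Vbar (2 * βbar)]
    rw [show (fun ω => V 0 ω * (βp (-1) ω + βp 0 ω))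
        = fun ω => V 0 ω * βp (-1) ω + V 0 ω * βp 0 ω from funext fun ω => by ring,
      integral_add (hInt _) (hInt _), integral_add (hInt _) (hInt _)]
    simp only [hcov]
    simp only [hmeanV, hmeanB, hUbar, hVbar, hβbar]
    ring
  -- step A : variance of the sum as a double sum of covariances
  have hvar : variance (fun ω => ∑ i : ZMod n, (U i ω + V i ω + cp * βp i ω + cm * βm i ω)) P
      = ∑ i : ZMod n, ∑ j : ZMod n, cov (W i) (W j) := by
    have hWsum : (fun ω => ∑ i : ZMod n, (U i ω + V i ω + cp * βp i ω + cm * βm i ω))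
        = fun ω => ∑ i : ZMod n, W i ω := rfl
    have h1 : ∫ ω, ((fun ω => ∑ i : ZMod n, W i ω) ^ 2) ω ∂P
        = ∑ i : ZMod n, ∑ j : ZMod n, ∫ ω, W i ω * W j ω ∂P := by
      rw [show ((fun ω => ∑ i : ZMod n, W i ω) ^ 2)
          = fun ω => ∑ i : ZMod n, ∑ j : ZMod n, W i ω * W j ω from funext fun ω => by
            simp [pow_two, Finset.sum_mul_sum]]
      rw [integral_finset_sum _ (fun i _ => hInt _)]
      exact Finset.sum_congr rfl fun i _ => integral_finset_sum _ (fun j _ => hInt _)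
    have h2 : ∫ ω, (∑ i : ZMod n, W i ω) ∂P = ∑ i : ZMod n, ∫ ω, W i ω ∂P :=
      integral_finset_sum _ (fun i _ => hInt _)
    have h3 : ∑ i : ZMod n, ∑ j : ZMod n, cov (W i) (W j)
        = (∑ i : ZMod n, ∑ j : ZMod n, ∫ ω, W i ω * W j ω ∂P)
          - (∑ i : ZMod n, ∫ ω, W i ω ∂P) * (∑ j : ZMod n, ∫ ω, W j ω ∂P) := by
      simp only [hcov]
      rw [Finset.sum_mul_sum, ← Finset.sum_sub_distrib]
      exact Finset.sum_congr rfl fun i _ => by rw [← Finset.sum_sub_distrib]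
    rw [hWsum, variance_eq_sub MemLp.of_discrete, h1, h2, h3, pow_two]
  -- reindexing : every row sums to the same thing
  have hre : ∑ i : ZMod n, ∑ j : ZMod n, cov (W i) (W j)
      = (n : ℝ) * ∑ d : ZMod n, cov (W 0) (W d) := by
    have hrow : ∀ i : ZMod n, ∑ j : ZMod n, cov (W i) (W j)
        = ∑ d : ZMod n, cov (W 0) (W d) := by
      intro i
      rw [← Equiv.sum_comp (Equiv.addLeft i) (fun j => cov (W i) (W j))]
      refine Finset.sum_congr rfl fun d _ => ?_
      simp only [Equiv.coe_addLeft]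
      have h := hcshift W W hshW hshW 0 d i
      rw [zero_add, add_comm d i] at h
      exact h
    rw [Finset.sum_congr rfl fun i _ => hrow i, Finset.sum_const, Finset.card_univ,
      ZMod.card, nsmul_eq_mul]
  -- only the three central terms survive
  have hsum3 : ∑ d : ZMod n, cov (W 0) (W d)
      = cov (W 0) (W (-1)) + cov (W 0) (W 0) + cov (W 0) (W 1) := by
    have hne1 : (-1 : ZMod n) ≠ 0 := by
      have := zmod_intCast_ne (M := n) (-1) 0 (by omega) (by push_cast; omega)
        (by push_cast; omega)
      simpa using this
    have hne2 : (-1 : ZMod n) ≠ 1 := by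
      have := zmod_intCast_ne (M := n) (-1) 1 (by omega) (by push_cast; omega)
        (by push_cast; omega)
      simpa using this
    have hne3 : (0 : ZMod n) ≠ 1 := by
      have := zmod_intCast_ne (M := n) 0 1 (by omega) (by push_cast; omega)
        (by push_cast; omega)
      simpa using this
    rw [(Finset.sum_subset (Finset.subset_univ ({-1, 0, 1} : Finset (ZMod n)))
      (fun d _ hd => hblock d hd)).symm]
    rw [Finset.sum_insert (by simp [hne1, hne2]), Finset.sum_insert (by simp [hne3]),
      Finset.sum_singleton]
    ring
  -- final assembly
  rw [hvar, hre, hsum3, hσuu, hσvv, hσuv, hσββ, hσβu, hσβv, hcW 0 (-1), hcW 0 0, hcW 0 1]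
  simp only [eUU, zUU1, zUV1, zUB1, zUBm2, eVUm1, eVU0, eVU1, eVV, zVV1, zVB1,
    eBUm1, eBU0, eBU1, eBVm1, eBV0, eBV1, zBMm1, zBM0, zBM1, zMBm1, zMB0, zMB1,
    mU, mV, mMU, mMV, mMM,
    show (-(-1 : ZMod n) - 1 : ZMod n) = 0 from by ring,
    show (-(0 : ZMod n) - 1 : ZMod n) = -1 from by ring,
    show (-(1 : ZMod n) - 1 : ZMod n) = -2 from by ring,
    show (-(-1 : ZMod n) : ZMod n) = 1 from by ring,
    show (-(0 : ZMod n) : ZMod n) = 0 from by ring,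
    show ((-1 : ZMod n) - 1 : ZMod n) = -2 from by ring,
    show ((0 : ZMod n) - 1 : ZMod n) = -1 from by ring,
    show ((1 : ZMod n) - 1 : ZMod n) = 0 from by ring]
  ring
end
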